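/- arXiv:2408.07742 — 3 statements merged into one kernel-verified Lean document; each statement's English description precedes it below -/
import Mathlib

section
/- For a Hermitian matrix H with eigenvalues in [E₀, E_{N-1}] and a real number a ∉ [E₀, E_{N-1}], the resolvent satisfies (a - H)^{-1} = (1/π)·sgn(a - E₀) ∫₀^∞ ∫_{-∞}^∞ e^{-y²/2} e^{iy(a - H)q} dy dq. -/
open MeasureTheory Complex Nat

set_option maxHeartbeats 1000000
set_option synthInstance.maxHeartbeats 1000000

noncomputable section

abbrev Op (N : ℕ) := EuclideanSpace ℂ (Fin N) →L[ℂ] EuclideanSpace ℂ (Fin N)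


lemma int_inner (q b : ℝ) :
    Integrable (fun y : ℝ => ((Real.exp (-y ^ 2 / 2) : ℝ) : ℂ) * Complex.exp (I * y * q * b)) := by
  have h := integrable_cexp_quadratic (b := (1/2 : ℂ)) (by norm_num) (I * q * b) 0
  apply h.congr
  filter_upwards with y
  rw [Complex.ofReal_exp, ← Complex.exp_add]
  congr 1
  push_cast
  ring

lemma inner_gauss (q b : ℝ) :
    ∫ y : ℝ, ((Real.exp (-y ^ 2 / 2) : ℝ) : ℂ) * Complex.exp (I * y * q * b) =
      ((Real.sqrt (2 * Real.pi) : ℝ) : ℂ) * Complex.exp (-(((q * b : ℝ) : ℂ)) ^ 2 / 2) := by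
  have h := fourierIntegral_gaussian (b := (1/2 : ℂ)) (by norm_num) (((q * b : ℝ)) : ℂ)
  have hl : (∫ y : ℝ, ((Real.exp (-y ^ 2 / 2) : ℝ) : ℂ) * Complex.exp (I * y * q * b)) =
      ∫ x : ℝ, Complex.exp (I * ((q * b : ℝ) : ℂ) * x) * Complex.exp (-(1/2 : ℂ) * x ^ 2) := by
    congr 1
    funext y
    rw [Complex.ofReal_exp, ← Complex.exp_add, ← Complex.exp_add]
    congr 1
    push_cast
    ring
  rw [hl, h]
  have hK : ((Real.pi : ℂ) / (1/2 : ℂ)) ^ (1/2 : ℂ) = ((Real.sqrt (2 * Real.pi) : ℝ) : ℂ) := by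
    have h2 : ((Real.pi : ℂ) / (1/2 : ℂ)) = ((2 * Real.pi : ℝ) : ℂ) := by push_cast; ring
    rw [h2, Real.sqrt_eq_rpow, Complex.ofReal_cpow (by positivity)]
    norm_num
  rw [hK]
  congr 1
  congr 1
  push_cast
  ring

lemma int_outer (b : ℝ) (hb : b ≠ 0) :
    IntegrableOn (fun q : ℝ => Complex.exp (-(((q * b : ℝ) : ℂ)) ^ 2 / 2)) (Set.Ioi 0) := by
  have h : Integrable (fun q : ℝ => ((Real.exp (-(b ^ 2 / 2) * q ^ 2) : ℝ) : ℂ)) := by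
    exact (integrable_exp_neg_mul_sq (by positivity)).ofReal
  apply (h.restrict (s := Set.Ioi 0)).congr
  filter_upwards with q
  rw [Complex.ofReal_exp]
  congr 1
  push_cast
  ring

lemma outer_gauss (b : ℝ) :
    ∫ q in Set.Ioi (0 : ℝ), Complex.exp (-(((q * b : ℝ) : ℂ)) ^ 2 / 2) =
      ((Real.sqrt (Real.pi / (b ^ 2 / 2)) / 2 : ℝ) : ℂ) := by
  have h0 : ∀ q : ℝ, Complex.exp (-(((q * b : ℝ) : ℂ)) ^ 2 / 2) =
      ((Real.exp (-(b ^ 2 / 2) * q ^ 2) : ℝ) : ℂ) := by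
    intro q
    rw [Complex.ofReal_exp]
    congr 1
    push_cast
    ring
  simp_rw [h0]
  rw [show ((√(Real.pi / (b ^ 2 / 2)) / 2 : ℝ) : ℂ) = ((∫ q in Set.Ioi (0:ℝ), Real.exp (-(b ^ 2 / 2) * q ^ 2) : ℝ) : ℂ) from by rw [integral_gaussian_Ioi]]
  exact integral_ofReal

lemma sum_proj_apply {N : ℕ} (e : OrthonormalBasis (Fin N) ℂ (EuclideanSpace ℂ (Fin N)))
    (f : Fin N → ℂ) (j : Fin N) :
    (∑ i, f i • (innerSL ℂ (e i)).smulRight (e i)) (e j) = f j • e j := by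
  rw [ContinuousLinearMap.sum_apply]
  rw [Finset.sum_eq_single j]
  · simp [orthonormal_iff_ite.mp e.orthonormal j j]
  · intro i _ hij
    simp [orthonormal_iff_ite.mp e.orthonormal i j, hij]
  · simp

lemma diag_rep {N : ℕ} (e : OrthonormalBasis (Fin N) ℂ (EuclideanSpace ℂ (Fin N)))
    (T : Op N) (f : Fin N → ℂ) (h : ∀ i, T (e i) = f i • e i) :
    T = ∑ i, f i • (innerSL ℂ (e i)).smulRight (e i) := by
  apply ContinuousLinearMap.coe_injective
  apply Module.Basis.ext e.toBasis
  intro j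
  simp only [OrthonormalBasis.coe_toBasis, ContinuousLinearMap.coe_coe]
  rw [h j, sum_proj_apply]

lemma exp_eigen {N : ℕ} (T : Op N) (v : EuclideanSpace ℂ (Fin N)) (c : ℂ) (h : T v = c • v) :
    NormedSpace.exp T v = Complex.exp c • v := by
  have hpow : ∀ n : ℕ, (T ^ n) v = c ^ n • v := by
    intro n
    induction n with
    | zero => simp
    | succ n ih =>
        rw [pow_succ, ContinuousLinearMap.mul_apply, h, ContinuousLinearMap.map_smul, ih, smul_smul, mul_comm,
          ← pow_succ]
  have hsum : Summable fun n : ℕ => ((n ! : ℂ)⁻¹) • T ^ n := NormedSpace.expSeries_summable' T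
  have hsum2 : Summable fun n : ℕ => ((n ! : ℂ)⁻¹) * c ^ n := by
    simpa [smul_eq_mul] using NormedSpace.expSeries_summable' (𝕂 := ℂ) c
  calc NormedSpace.exp T v = (∑' n : ℕ, ((n ! : ℂ)⁻¹) • T ^ n) v := by
        rw [NormedSpace.exp_eq_tsum ℂ]
    _ = ∑' n : ℕ, (((n ! : ℂ)⁻¹) • T ^ n) v := by
        exact ContinuousLinearMap.map_tsum (ContinuousLinearMap.apply ℂ _ v) hsum
    _ = ∑' n : ℕ, (((n ! : ℂ)⁻¹) * c ^ n) • v := by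
        simp_rw [ContinuousLinearMap.smul_apply, hpow, smul_smul]
    _ = (∑' n : ℕ, ((n ! : ℂ)⁻¹) * c ^ n) • v := hsum2.tsum_smul_const v
    _ = Complex.exp c • v := by
        rw [Complex.exp_eq_exp_ℂ, NormedSpace.exp_eq_tsum ℂ]
        simp [smul_eq_mul]

lemma real_smul_op {N : ℕ} (r : ℝ) (X : Op N) : r • X = (r : ℂ) • X := by
  rw [← smul_one_smul ℂ r X]
  norm_num

/-- Gaussian-kernel double-integral representation of the resolvent for a real
pole `a` outside the spectral interval `[Elo, Ehi]`. -/
theorem stmt1 {N : ℕ} (A : Op N) (hA : IsSelfAdjoint A) (Elo Ehi a : ℝ)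
    (hle : Elo ≤ Ehi)
    (hspec : spectrum ℂ A ⊆ Complex.ofReal '' Set.Icc Elo Ehi)
    (ha : a ∉ Set.Icc Elo Ehi) :
    Ring.inverse ((a : ℂ) • (1 : Op N) - A) =
      ((Real.sign (a - Elo) / Real.pi : ℝ)) •
        ∫ q in Set.Ioi (0 : ℝ), ∫ y : ℝ,
          Real.exp (-y ^ 2 / 2) •
            NormedSpace.exp ((I * y * q) • ((a : ℂ) • (1 : Op N) - A)) := by
  classical
  have hsym : (A : EuclideanSpace ℂ (Fin N) →ₗ[ℂ] EuclideanSpace ℂ (Fin N)).IsSymmetric :=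
    ContinuousLinearMap.isSelfAdjoint_iff_isSymmetric.mp hA
  have hn : Module.finrank ℂ (EuclideanSpace ℂ (Fin N)) = N := finrank_euclideanSpace_fin
  set e := hsym.eigenvectorBasis hn with he
  set μ := hsym.eigenvalues hn with hμ
  set B : Op N := (a : ℂ) • (1 : Op N) - A with hB
  set P : Fin N → Op N := fun i => (innerSL ℂ (e i)).smulRight (e i) with hP
  have hA_apply : ∀ i, A (e i) = (μ i : ℂ) • e i := fun i => hsym.apply_eigenvectorBasis hn i
  have hBe : ∀ i, B (e i) = ((a - μ i : ℝ) : ℂ) • e i := by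
    intro i
    rw [hB, ContinuousLinearMap.sub_apply, ContinuousLinearMap.smul_apply,
      ContinuousLinearMap.one_apply, hA_apply i]
    push_cast
    rw [sub_smul]
  -- each eigenvalue lies in [Elo, Ehi]
  have hmem : ∀ i, μ i ∈ Set.Icc Elo Ehi := by
    intro i
    have hvne : e i ≠ 0 := by
      have := e.toBasis.ne_zero i
      simpa using this
    have hsp : (μ i : ℂ) ∈ spectrum ℂ A := by
      rw [spectrum.mem_iff]
      intro hu
      have h0 : (algebraMap ℂ (Op N) (μ i) - A) (e i) = 0 := by
        rw [Algebra.algebraMap_eq_smul_one, ContinuousLinearMap.sub_apply,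
          ContinuousLinearMap.smul_apply, ContinuousLinearMap.one_apply, hA_apply i, sub_self]
      obtain ⟨u, hu⟩ := hu
      apply hvne
      have h1 : (↑u⁻¹ * ↑u : Op N) (e i) = (1 : Op N) (e i) := by rw [u.inv_mul]
      rw [ContinuousLinearMap.mul_apply, hu, h0, map_zero, ContinuousLinearMap.one_apply] at h1
      exact h1.symm
    obtain ⟨x, hx, hxe⟩ := hspec hsp
    rwa [Complex.ofReal_inj.mp hxe] at hx
  have hbne : ∀ i, a - μ i ≠ 0 := by
    intro i
    rcases (not_and_or.mp (fun h => ha ⟨h.1, h.2⟩)) with h | h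
    · have := (hmem i).1; intro hc; push_neg at h; nlinarith [h]
    · have := (hmem i).2; intro hc; push_neg at h; nlinarith [h]
  -- key scalar coefficient identity
  have hcoef : ∀ i, ((Real.sign (a - Elo) / Real.pi) *
      (Real.sqrt (2 * Real.pi) * (Real.sqrt (Real.pi / ((a - μ i) ^ 2 / 2)) / 2)) : ℝ)
      = (a - μ i)⁻¹ := by
    intro i
    have hb := hbne i
    have hπ := Real.pi_pos
    have h1 : Real.pi / ((a - μ i) ^ 2 / 2) = 2 * Real.pi / (a - μ i) ^ 2 := by field_simp
    have h2 : Real.sqrt (2 * Real.pi / (a - μ i) ^ 2)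
        = Real.sqrt (2 * Real.pi) / |a - μ i| := by
      rw [Real.sqrt_div' _ ?_]
      · rw [Real.sqrt_sq_eq_abs]
      · positivity
    rw [h1, h2]
    have h3 : Real.sqrt (2 * Real.pi) * (Real.sqrt (2 * Real.pi) / |a - μ i| / 2)
        = Real.pi / |a - μ i| := by
      rw [div_div, ← mul_div_assoc, Real.mul_self_sqrt (by positivity)]
      ring
    rw [h3]
    rcases (not_and_or.mp (fun h => ha ⟨h.1, h.2⟩)) with h | h
    · push_neg at h
      have hblt : a - μ i < 0 := by have := (hmem i).1; linarith
      rw [Real.sign_of_neg (by linarith : a - Elo < 0), abs_of_neg hblt]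
      have hb2 : μ i - a ≠ 0 := fun hc => hb (by linarith)
      field_simp [hb2]
    · push_neg at h
      have hbgt : 0 < a - μ i := by have := (hmem i).2; linarith
      rw [Real.sign_of_pos (by linarith : 0 < a - Elo), abs_of_pos hbgt]
      field_simp
  have hbC : ∀ i, ((a - μ i : ℝ) : ℂ) ≠ 0 := fun i => Complex.ofReal_ne_zero.mpr (hbne i)
  -- exponential of z • B
  have hexp : ∀ z : ℂ, NormedSpace.exp (z • B)
      = ∑ i, Complex.exp (z * ((a - μ i : ℝ) : ℂ)) • P i := by
    intro z
    refine diag_rep e _ _ fun i => ?_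
    refine exp_eigen _ _ _ ?_
    rw [ContinuousLinearMap.smul_apply, hBe i, smul_smul]
  -- inner integral
  have hinner : ∀ q : ℝ,
      (∫ y : ℝ, Real.exp (-y ^ 2 / 2) • NormedSpace.exp ((I * (y : ℂ) * (q : ℂ)) • B))
      = ∑ i, ((((Real.sqrt (2 * Real.pi) : ℝ) : ℂ))
          * Complex.exp (-(((q * (a - μ i) : ℝ) : ℂ)) ^ 2 / 2)) • P i := by
    intro q
    have h1 : ∀ y : ℝ, Real.exp (-y ^ 2 / 2) • NormedSpace.exp ((I * (y : ℂ) * (q : ℂ)) • B)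
        = ∑ i, ((((Real.exp (-y ^ 2 / 2) : ℝ) : ℂ))
            * Complex.exp (I * y * q * ((a - μ i : ℝ) : ℂ))) • P i := by
      intro y
      rw [hexp, Finset.smul_sum]
      refine Finset.sum_congr rfl fun i _ => ?_
      rw [real_smul_op, smul_smul]
    simp_rw [h1]
    rw [integral_finset_sum _ fun i _ => (int_inner q (a - μ i)).smul_const (P i)]
    refine Finset.sum_congr rfl fun i _ => ?_
    rw [integral_smul_const, inner_gauss]
  -- outer integral
  have houter : (∫ q in Set.Ioi (0 : ℝ), ∑ i, ((((Real.sqrt (2 * Real.pi) : ℝ) : ℂ))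
          * Complex.exp (-(((q * (a - μ i) : ℝ) : ℂ)) ^ 2 / 2)) • P i)
      = ∑ i, ((((Real.sqrt (2 * Real.pi) : ℝ) : ℂ))
          * (((Real.sqrt (Real.pi / ((a - μ i) ^ 2 / 2)) / 2 : ℝ) : ℂ))) • P i := by
    rw [integral_finset_sum _ fun i _ =>
      (((int_outer (a - μ i) (hbne i)).const_mul _).smul_const (P i))]
    refine Finset.sum_congr rfl fun i _ => ?_
    rw [integral_smul_const, integral_const_mul, outer_gauss]
  -- the inverse
  have hRB : (∑ i, ((a - μ i : ℝ) : ℂ)⁻¹ • P i) * B = 1 := by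
    apply ContinuousLinearMap.coe_injective
    apply Module.Basis.ext e.toBasis
    intro j
    simp only [OrthonormalBasis.coe_toBasis, ContinuousLinearMap.coe_coe]
    rw [ContinuousLinearMap.mul_apply, hBe j, ContinuousLinearMap.map_smul, sum_proj_apply,
      ContinuousLinearMap.one_apply, smul_smul, mul_inv_cancel₀ (hbC j), one_smul]
  have hBR : B * (∑ i, ((a - μ i : ℝ) : ℂ)⁻¹ • P i) = 1 := by
    apply ContinuousLinearMap.coe_injective
    apply Module.Basis.ext e.toBasis
    intro j
    simp only [OrthonormalBasis.coe_toBasis, ContinuousLinearMap.coe_coe]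
    rw [ContinuousLinearMap.mul_apply, sum_proj_apply, ContinuousLinearMap.map_smul, hBe j,
      ContinuousLinearMap.one_apply, smul_smul, inv_mul_cancel₀ (hbC j), one_smul]
  have hunit : Ring.inverse B = ∑ i, ((a - μ i : ℝ) : ℂ)⁻¹ • P i :=
    Ring.inverse_unit ⟨B, ∑ i, ((a - μ i : ℝ) : ℂ)⁻¹ • P i, hBR, hRB⟩
  rw [hunit]
  simp only [hinner]
  rw [houter, Finset.smul_sum]
  refine Finset.sum_congr rfl fun i _ => ?_
  rw [real_smul_op, smul_smul, ← Complex.ofReal_inv, ← hcoef i]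
  push_cast
  ring_nf
end
end

section
/- Supremum bound on the Bernstein ellipse for the resolvent integrand: let f_n(t) = exp(i(z - E_n)·T(1+t)/2) with z = a + ib, b > 0, E_n ∈ ℝ, and T > 0. Then for every σ > 1, sup_{t ∈ E_σ} |f_n(t)| ≤ exp( [ |a - E_n|(σ - σ^{-1}) + b(σ - 2 + σ^{-1}) ]·T/4 ). -/
open Complex

noncomputable section

/-- Supremum bound on the Bernstein ellipse for the resolvent integrand
`f_n(t) = exp(i (z - Eₙ) T (1+t)/2)` with `z = a + ib`, `b > 0`. -/
theorem stmt6 (a b En T σ : ℝ) (hb : 0 < b) (hT : 0 < T) (hσ : 1 < σ) (t : ℂ)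
    (ht : ∃ θ : ℝ, t = (σ / 2 : ℂ) * Complex.exp (I * θ) +
      (1 / (2 * σ) : ℂ) * Complex.exp (-(I * θ))) :
    ‖Complex.exp (I * (((a : ℂ) + b * I) - (En : ℂ)) * T * (1 + t) / 2)‖ ≤
      Real.exp ((|a - En| * (σ - σ⁻¹) + b * (σ - 2 + σ⁻¹)) * T / 4) := by
  obtain ⟨θ, rfl⟩ := ht
  rw [Complex.norm_exp, Real.exp_le_exp]
  have h1 : (I * (θ:ℂ)) = (θ:ℂ) * I := by ring
  have h2 : (-((θ:ℂ) * I)) = ((-θ:ℝ):ℂ) * I := by push_cast; ring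
  rw [h1, h2, Complex.exp_mul_I, Complex.exp_mul_I]
  simp [Complex.div_re, Complex.normSq, Complex.add_re, Complex.mul_re, Complex.mul_im,
    Complex.add_im, Real.cos_neg, Real.sin_neg]
  simp only [Complex.cos_ofReal_re, Complex.sin_ofReal_re]
  have hσ0 : (0:ℝ) < σ := lt_trans one_pos hσ
  have hi : σ⁻¹ ≤ 1 := by
    rw [inv_le_one_iff₀]; right; exact le_of_lt hσ
  have hi0 : 0 < σ⁻¹ := inv_pos.mpr hσ0
  have hii : σ⁻¹ ≤ σ := le_trans hi (le_of_lt hσ)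
  have hc1 := Real.neg_one_le_cos θ
  have hc2 := Real.cos_le_one θ
  have hs1 := Real.neg_one_le_sin θ
  have hs2 := Real.sin_le_one θ
  have ha1 : a - En ≤ |a - En| := le_abs_self _
  have ha2 : -(a - En) ≤ |a - En| := neg_le_abs _
  nlinarith [mul_nonneg hT.le (mul_nonneg (sub_nonneg.mpr hii) (sub_nonneg.mpr (by nlinarith : (En - a) * Real.sin θ ≤ |a - En|))),
    mul_nonneg (mul_nonneg (mul_nonneg hb.le hT.le) (add_nonneg hσ0.le hi0.le)) (by linarith : (0:ℝ) ≤ 1 + Real.cos θ)]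
end
end

section
/- Scalar Gaussian–oscillatory integral with absolute value: for Γ > 0 and E ∈ ℝ, | ∫_{-∞}^∞ (2πΓ)^{-1/2} e^{-q²/(2Γ)} e^{-iE|q|} dq |² = e^{-ΓE²} ( 1 + erfi²(√(Γ/2)·E) ). -/
open MeasureTheory Complex Filter

noncomputable section

/-- The imaginary error function `erfi x = (2/√π) ∫₀ˣ e^{t²} dt`. -/
def erfi (x : ℝ) : ℝ := (2 / Real.sqrt Real.pi) * ∫ t in (0 : ℝ)..x, Real.exp (t ^ 2)

namespace Stmt11Aux

/-- normalization constant -/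
def c0 (Γ : ℝ) : ℝ := (Real.sqrt (2 * Real.pi * Γ))⁻¹

/-- the integrand -/
def Φ (Γ e q : ℝ) : ℂ :=
  ((c0 Γ * Real.exp (-q ^ 2 / (2 * Γ)) : ℝ) : ℂ) * Complex.exp (-(I * (e : ℂ) * (|q| : ℝ)))

/-- the parametric integral -/
def F (Γ e : ℝ) : ℂ := ∫ q : ℝ, Φ Γ e q

lemma c0_nonneg (Γ : ℝ) : 0 ≤ c0 Γ := by
  unfold c0; positivity

lemma norm_Φ (Γ e q : ℝ) : ‖Φ Γ e q‖ = c0 Γ * Real.exp (-q ^ 2 / (2 * Γ)) := by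
  unfold Φ
  rw [norm_mul, Complex.norm_real, Real.norm_eq_abs, Complex.norm_exp]
  have : (-(I * (e : ℂ) * (|q| : ℝ))).re = 0 := by simp
  rw [this, Real.exp_zero, mul_one, _root_.abs_of_nonneg (mul_nonneg (c0_nonneg Γ) (Real.exp_pos _).le)]

lemma exp_rw (Γ : ℝ) : ∀ q : ℝ, -q ^ 2 / (2 * Γ) = -(2 * Γ)⁻¹ * q ^ 2 := fun q => by ring

lemma int_gauss {Γ : ℝ} (hΓ : 0 < Γ) :
    Integrable fun q : ℝ => Real.exp (-q ^ 2 / (2 * Γ)) := by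
  simp only [exp_rw Γ]
  exact integrable_exp_neg_mul_sq (by positivity)

lemma int_gauss_abs {Γ : ℝ} (hΓ : 0 < Γ) :
    Integrable fun q : ℝ => |q| * Real.exp (-q ^ 2 / (2 * Γ)) := by
  simp only [exp_rw Γ]
  have h := (integrable_mul_exp_neg_mul_sq (b := (2 * Γ)⁻¹) (by positivity)).abs
  refine h.congr (Filter.Eventually.of_forall fun q => ?_)
  simp only [abs_mul, _root_.abs_of_pos (Real.exp_pos _)]

lemma cont_Φ (Γ e : ℝ) : Continuous (Φ Γ e) := by
  unfold Φ
  refine Continuous.mul ?_ ?_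
  · exact Complex.continuous_ofReal.comp (by continuity)
  · exact Complex.continuous_exp.comp (by continuity)

lemma int_Φ {Γ : ℝ} (hΓ : 0 < Γ) (e : ℝ) : Integrable (Φ Γ e) := by
  refine ((int_gauss hΓ).const_mul (c0 Γ)).mono' (cont_Φ Γ e).aestronglyMeasurable ?_
  exact Filter.Eventually.of_forall fun q => le_of_eq (norm_Φ Γ e q)

lemma int_Φ_abs {Γ : ℝ} (hΓ : 0 < Γ) (e : ℝ) :
    Integrable fun q : ℝ => Φ Γ e q * (|q| : ℝ) := by
  refine ((int_gauss_abs hΓ).const_mul (c0 Γ)).mono'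
    ((cont_Φ Γ e).mul (Complex.continuous_ofReal.comp continuous_abs)).aestronglyMeasurable ?_
  refine Filter.Eventually.of_forall fun q => ?_
  rw [norm_mul, norm_Φ]
  simp only [Complex.norm_real, Real.norm_eq_abs, _root_.abs_abs]
  exact le_of_eq (by ring)


/-- half-line version of the integrand, without absolute value -/
def g (Γ e q : ℝ) : ℂ :=
  ((c0 Γ * Real.exp (-q ^ 2 / (2 * Γ)) : ℝ) : ℂ) * Complex.exp (-(I * (e : ℂ) * (q : ℝ))) *
    ((q : ℂ) + I * Γ * e)

/-- antiderivative on the half line -/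
def φ (Γ e q : ℝ) : ℂ :=
  (-(Γ : ℂ) * (c0 Γ : ℝ)) *
    (((Real.exp (-q ^ 2 / (2 * Γ)) : ℝ) : ℂ) * Complex.exp (-(I * (e : ℂ) * (q : ℝ))))

lemma hasDerivAt_φ {Γ : ℝ} (hΓ : 0 < Γ) (e q : ℝ) : HasDerivAt (φ Γ e) (g Γ e q) q := by
  have hr : HasDerivAt (fun q : ℝ => Real.exp (-q ^ 2 / (2 * Γ)))
      (Real.exp (-q ^ 2 / (2 * Γ)) * (-(2 * q) / (2 * Γ))) q := by
    have h1 : HasDerivAt (fun q : ℝ => -q ^ 2 / (2 * Γ)) (-(2 * q) / (2 * Γ)) q := by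
      simpa using ((hasDerivAt_pow 2 q).neg).div_const (2 * Γ)
    exact h1.exp
  have he : HasDerivAt (fun q : ℝ => Complex.exp (-(I * (e : ℂ) * (q : ℝ))))
      (Complex.exp (-(I * (e : ℂ) * (q : ℝ))) * (-(I * e))) q := by
    have h2 : HasDerivAt (fun q : ℝ => -(I * (e : ℂ) * (q : ℝ))) (-(I * e)) q := by
      simpa [Pi.neg_def] using (((hasDerivAt_id q).ofReal_comp).const_mul (I * (e:ℂ))).neg
    exact h2.cexp
  have h := ((hr.ofReal_comp).mul he).const_mul (-(Γ : ℂ) * (c0 Γ : ℝ))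
  refine h.congr_deriv ?_
  unfold g
  push_cast
  have hΓ0 : (Γ : ℂ) ≠ 0 := by exact_mod_cast hΓ.ne'
  field_simp
  ring

lemma norm_g (Γ e q : ℝ) :
    ‖g Γ e q‖ = c0 Γ * Real.exp (-q ^ 2 / (2 * Γ)) * ‖(q : ℂ) + I * Γ * e‖ := by
  unfold g
  rw [norm_mul, norm_mul]
  congr 1
  · rw [Complex.norm_real, Real.norm_eq_abs, Complex.norm_exp]
    have : (-(I * (e : ℂ) * (q : ℝ))).re = 0 := by simp
    rw [this, Real.exp_zero, mul_one,
      _root_.abs_of_nonneg (mul_nonneg (c0_nonneg Γ) (Real.exp_pos _).le)]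

lemma int_g {Γ : ℝ} (hΓ : 0 < Γ) (e : ℝ) : Integrable (g Γ e) := by
  refine (((int_gauss_abs hΓ).const_mul (c0 Γ)).add
    ((int_gauss hΓ).const_mul (c0 Γ * (|Γ| * |e|)))).mono' ?_ ?_
  · refine Continuous.aestronglyMeasurable ?_
    unfold g
    exact ((Complex.continuous_ofReal.comp (by continuity)).mul
      (Complex.continuous_exp.comp (by continuity))).mul (by continuity)
  · refine Eventually.of_forall fun q => ?_
    rw [norm_g]
    have h1 : ‖(q : ℂ) + I * Γ * e‖ ≤ |q| + |Γ| * |e| := by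
      refine (norm_add_le _ _).trans ?_
      simp [Complex.norm_real, abs_mul]
    calc c0 Γ * Real.exp (-q ^ 2 / (2 * Γ)) * ‖(q : ℂ) + I * Γ * e‖
        ≤ c0 Γ * Real.exp (-q ^ 2 / (2 * Γ)) * (|q| + |Γ| * |e|) := by
          exact mul_le_mul_of_nonneg_left h1 (mul_nonneg (c0_nonneg Γ) (Real.exp_pos _).le)
      _ = c0 Γ * (|q| * Real.exp (-q ^ 2 / (2 * Γ)))
          + c0 Γ * (|Γ| * |e|) * Real.exp (-q ^ 2 / (2 * Γ)) := by ring

lemma tendsto_φ {Γ : ℝ} (hΓ : 0 < Γ) (e : ℝ) : Tendsto (φ Γ e) atTop (nhds 0) := by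
  have hb : Tendsto (fun q : ℝ => Γ * c0 Γ * Real.exp (-q ^ 2 / (2 * Γ))) atTop (nhds 0) := by
    have h1 : Tendsto (fun q : ℝ => -q ^ 2 / (2 * Γ)) atTop atBot := by
      have h2 : Tendsto (fun q : ℝ => q ^ 2 / (2 * Γ)) atTop atTop :=
        (tendsto_pow_atTop two_ne_zero).atTop_div_const (by positivity)
      simpa [neg_div] using h2
    have := (Real.tendsto_exp_atBot.comp h1).const_mul (Γ * c0 Γ)
    simpa using this
  refine squeeze_zero_norm (fun q => ?_) hb
  refine le_of_eq ?_
  unfold φ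
  simp only [norm_mul, norm_neg, Complex.norm_real, Real.norm_eq_abs, Complex.norm_exp]
  have : (-(I * (e : ℂ) * (q : ℝ))).re = 0 := by simp
  rw [this, Real.exp_zero, mul_one, _root_.abs_of_pos hΓ,
    _root_.abs_of_nonneg (c0_nonneg Γ), _root_.abs_of_pos (Real.exp_pos _)]

lemma integral_g_Ioi {Γ : ℝ} (hΓ : 0 < Γ) (e : ℝ) :
    ∫ q in Set.Ioi (0 : ℝ), g Γ e q = Γ * c0 Γ := by
  have h := integral_Ioi_of_hasDerivAt_of_tendsto
    (f := φ Γ e) (f' := g Γ e) (a := 0)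
    ((hasDerivAt_φ hΓ e 0).continuousAt.continuousWithinAt)
    (fun x _ => hasDerivAt_φ hΓ e x) (int_g hΓ e).integrableOn (tendsto_φ hΓ e)
  rw [h]
  unfold φ
  push_cast
  simp [Real.exp_zero]


lemma Φ_mul_eq (Γ e : ℝ) (q : ℝ) :
    Φ Γ e q * ((|q| : ℝ) + I * Γ * e) = g Γ e |q| := by
  unfold Φ g
  rw [← _root_.sq_abs q]

lemma key {Γ : ℝ} (hΓ : 0 < Γ) (e : ℝ) :
    ∫ q : ℝ, Φ Γ e q * ((|q| : ℝ) + I * Γ * e) = 2 * (Γ * c0 Γ) := by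
  have hint : Integrable fun q : ℝ => g Γ e |q| := by
    have h := (int_Φ_abs hΓ e).add ((int_Φ hΓ e).mul_const (I * Γ * e))
    refine h.congr (Filter.Eventually.of_forall fun q => ?_)
    simp only [Pi.add_apply]
    rw [← Φ_mul_eq]
    push_cast
    ring
  simp only [Φ_mul_eq]
  have hsplit := intervalIntegral.integral_Iic_add_Ioi (b := (0:ℝ)) hint.integrableOn hint.integrableOn
  have hIic : (∫ q in Set.Iic (0:ℝ), g Γ e |q|) = ∫ q in Set.Ioi (0:ℝ), g Γ e q := by
    have h1 : (∫ q in Set.Iic (0:ℝ), g Γ e |q|) = ∫ q in Set.Iic (0:ℝ), g Γ e (-q) := by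
      refine setIntegral_congr_fun measurableSet_Iic fun x hx => ?_
      rw [abs_of_nonpos hx]
    rw [h1, integral_comp_neg_Iic, neg_zero]
  have hIoi : (∫ q in Set.Ioi (0:ℝ), g Γ e |q|) = ∫ q in Set.Ioi (0:ℝ), g Γ e q := by
    refine setIntegral_congr_fun measurableSet_Ioi fun x hx => ?_
    rw [abs_of_pos hx]
  rw [← hsplit, hIic, hIoi, integral_g_Ioi hΓ e]
  ring

lemma hasDerivAt_F {Γ : ℝ} (hΓ : 0 < Γ) (e : ℝ) :
    HasDerivAt (F Γ) (-((Γ:ℂ) * e) * F Γ e - I * (2 * (Γ * c0 Γ) : ℝ)) e := by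
  have key' := hasDerivAt_integral_of_dominated_loc_of_deriv_le (μ := volume)
    (F := fun x q => Φ Γ x q) (F' := fun x q => Φ Γ x q * (-(I * (|q| : ℝ))))
    (x₀ := e) (bound := fun q => c0 Γ * (|q| * Real.exp (-q ^ 2 / (2 * Γ))))
    (Metric.ball_mem_nhds e zero_lt_one)
    (Filter.Eventually.of_forall fun x => (cont_Φ Γ x).aestronglyMeasurable)
    (int_Φ hΓ e)
    (((cont_Φ Γ e).mul (by continuity)).aestronglyMeasurable)
    (Filter.Eventually.of_forall fun q => fun x _ => ?_)
    (((int_gauss_abs hΓ).const_mul (c0 Γ)))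
    (Filter.Eventually.of_forall fun q => fun x _ => ?_)
  · have h2 := key'.2
    have h3 : (∫ q : ℝ, Φ Γ e q * (-(I * (|q| : ℝ))))
        = -((Γ:ℂ) * e) * F Γ e - I * (2 * (Γ * c0 Γ) : ℝ) := by
      have hadd : (∫ q : ℝ, Φ Γ e q * ((|q| : ℝ) + I * Γ * e))
          = (∫ q : ℝ, Φ Γ e q * (|q| : ℝ)) + (∫ q : ℝ, Φ Γ e q) * (I * Γ * e) := by
        rw [← integral_mul_const]
        rw [← integral_add (int_Φ_abs hΓ e) ((int_Φ hΓ e).mul_const _)]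
        congr 1; funext q; ring
      have habs : (∫ q : ℝ, Φ Γ e q * (|q| : ℝ))
          = 2 * (Γ * c0 Γ) - F Γ e * (I * Γ * e) := by
        have := key hΓ e
        rw [hadd] at this
        unfold F
        push_cast at this ⊢
        linear_combination this
      calc (∫ q : ℝ, Φ Γ e q * (-(I * (|q| : ℝ))))
          = (∫ q : ℝ, Φ Γ e q * (|q| : ℝ)) * (-I) := by
            rw [← integral_mul_const]; congr 1; funext q; ring
        _ = -((Γ:ℂ) * e) * F Γ e - I * (2 * (Γ * c0 Γ) : ℝ) := by
            rw [habs]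
            push_cast
            linear_combination (F Γ e * (Γ:ℂ) * e) * Complex.I_sq
    rw [h3] at h2
    exact h2
  · rw [norm_mul, norm_Φ]
    have : ‖(-(I * ((|q| : ℝ) : ℂ)))‖ = |q| := by
      simp [Complex.norm_real, _root_.abs_abs]
    rw [this]; exact le_of_eq (by ring)
  · have hfun : (fun x : ℝ => Φ Γ x q)
        = fun x : ℝ => ((c0 Γ * Real.exp (-q ^ 2 / (2 * Γ)) : ℝ) : ℂ)
            * Complex.exp ((-(I * (|q| : ℝ))) * x) := by
      funext x; unfold Φ; congr 2; ring
    rw [hfun]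
    have h4 := ((((hasDerivAt_id x).ofReal_comp).const_mul
      (-(I * ((|q| : ℝ) : ℂ)))).cexp).const_mul ((c0 Γ * Real.exp (-q ^ 2 / (2 * Γ)) : ℝ) : ℂ)
    have harg : -(I * ((x:ℝ):ℂ) * ((|q|:ℝ):ℂ)) = (-(I * ((|q|:ℝ):ℂ))) * x := by ring
    refine h4.congr_deriv ?_
    simp only [id, Complex.ofReal_one, mul_one]
    unfold Φ
    rw [harg]
    ring

lemma sqrt_ne (Γ : ℝ) (hΓ : 0 < Γ) : Real.sqrt (2 * Real.pi * Γ) ≠ 0 := by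
  refine (Real.sqrt_ne_zero' ).mpr ?_
  positivity

lemma F_zero {Γ : ℝ} (hΓ : 0 < Γ) : F Γ 0 = 1 := by
  unfold F Φ
  simp only [Complex.ofReal_zero, mul_zero, zero_mul, neg_zero, Complex.exp_zero, mul_one]
  rw [show (fun q : ℝ => ((c0 Γ * Real.exp (-q ^ 2 / (2 * Γ)) : ℝ) : ℂ))
      = fun q : ℝ => (RCLike.ofReal (K := ℂ) (c0 Γ * Real.exp (-q ^ 2 / (2 * Γ)))) from rfl,
    integral_ofReal]
  rw [show ∀ r : ℝ, RCLike.ofReal (K := ℂ) r = (r : ℂ) from fun r => rfl]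
  have h1 : (∫ q : ℝ, c0 Γ * Real.exp (-q ^ 2 / (2 * Γ)))
      = c0 Γ * ∫ q : ℝ, Real.exp (-q ^ 2 / (2 * Γ)) := integral_const_mul _ _
  rw [h1]
  simp only [exp_rw Γ]
  rw [integral_gaussian]
  have h2 : Real.pi / (2 * Γ)⁻¹ = 2 * Real.pi * Γ := by field_simp
  rw [h2]
  unfold c0
  rw [inv_mul_cancel₀ (sqrt_ne Γ hΓ)]
  norm_num

/-- the ODE solution -/
lemma F_eq {Γ : ℝ} (hΓ : 0 < Γ) (E : ℝ) :
    Complex.exp ((Γ * E ^ 2 / 2 : ℝ) : ℂ) * F Γ E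
      = 1 - I * ((∫ s in (0:ℝ)..E, 2 * (Γ * c0 Γ) * Real.exp (Γ * s ^ 2 / 2) : ℝ) : ℂ) := by
  set v : ℝ → ℝ := fun e => ∫ s in (0:ℝ)..e, 2 * (Γ * c0 Γ) * Real.exp (Γ * s ^ 2 / 2) with hv
  set W : ℝ → ℂ := fun e => Complex.exp ((Γ * e ^ 2 / 2 : ℝ) : ℂ) * F Γ e + I * (v e : ℂ) with hW
  have hcont : Continuous fun s : ℝ => 2 * (Γ * c0 Γ) * Real.exp (Γ * s ^ 2 / 2) := by continuity
  have hWd : ∀ e : ℝ, HasDerivAt W 0 e := by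
    intro e
    have h1 : HasDerivAt (fun e : ℝ => (Γ * e ^ 2 / 2 : ℝ)) (Γ * e) e := by
      have := ((hasDerivAt_pow 2 e).const_mul Γ).div_const 2
      refine this.congr_deriv ?_
      simp; ring
    have h2 := (h1.ofReal_comp).cexp
    have h3 := h2.mul (hasDerivAt_F hΓ e)
    have h4 : HasDerivAt v (2 * (Γ * c0 Γ) * Real.exp (Γ * e ^ 2 / 2)) e := by
      refine intervalIntegral.integral_hasDerivAt_right
        (hcont.intervalIntegrable _ _) ?_ hcont.continuousAt
      exact hcont.stronglyMeasurable.stronglyMeasurableAtFilter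
    have h5 := (h4.ofReal_comp).const_mul I
    have h6 := h3.add h5
    refine h6.congr_deriv ?_
    push_cast [Complex.ofReal_exp]
    ring
  have hconst : W E = W 0 :=
    is_const_of_deriv_eq_zero (fun x => (hWd x).differentiableAt) (fun x => (hWd x).deriv) E 0
  have hW0 : W 0 = 1 := by
    simp only [hW, hv]
    rw [intervalIntegral.integral_same, F_zero hΓ]
    norm_num
  have := hconst.trans hW0
  simp only [hW] at this
  have : Complex.exp ((Γ * E ^ 2 / 2 : ℝ) : ℂ) * F Γ E = 1 - I * (v E : ℂ) := by
    linear_combination this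
  exact this

lemma v_eq_erfi {Γ : ℝ} (hΓ : 0 < Γ) (E : ℝ) :
    (∫ s in (0:ℝ)..E, 2 * (Γ * c0 Γ) * Real.exp (Γ * s ^ 2 / 2))
      = erfi (Real.sqrt (Γ / 2) * E) := by
  set x : ℝ := Real.sqrt (Γ / 2) with hx
  have hx0 : 0 < x := Real.sqrt_pos.mpr (by positivity)
  have hxs : x ^ 2 = Γ / 2 := Real.sq_sqrt (by positivity)
  have h1 : ∀ s : ℝ, Real.exp (Γ * s ^ 2 / 2) = (fun t => Real.exp (t ^ 2)) (s * x) := by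
    intro s
    simp only [mul_pow, hxs]
    ring_nf
  rw [intervalIntegral.integral_const_mul]
  simp only [h1]
  rw [intervalIntegral.integral_comp_mul_right (fun t => Real.exp (t ^ 2)) hx0.ne']
  rw [zero_mul, smul_eq_mul]
  unfold erfi
  rw [show E * x = x * E from mul_comm E x]
  have hkey : 2 * (Γ * c0 Γ) * x⁻¹ = 2 / Real.sqrt Real.pi := by
    have hsq : Real.sqrt (2 * Real.pi * Γ) * x = Γ * Real.sqrt Real.pi := by
      rw [hx, ← Real.sqrt_mul (by positivity)]
      rw [show 2 * Real.pi * Γ * (Γ / 2) = Γ ^ 2 * Real.pi by ring,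
        Real.sqrt_mul (by positivity), Real.sqrt_sq hΓ.le]
    have hstep : 2 * (Γ * c0 Γ) * x⁻¹ = 2 * Γ / (Real.sqrt (2 * Real.pi * Γ) * x) := by
      unfold c0; rw [div_eq_mul_inv, mul_inv]; ring
    rw [hstep, hsq, show (2:ℝ) * Γ = Γ * 2 from by ring,
      mul_div_mul_left _ _ hΓ.ne']
  rw [← mul_assoc, hkey]
end Stmt11Aux

open Stmt11Aux

/-- Scalar Gaussian–oscillatory integral with absolute value:
`|∫ (2πΓ)^{-1/2} e^{-q²/(2Γ)} e^{-iE|q|} dq|² = e^{-ΓE²}(1 + erfi²(√(Γ/2) E))`. -/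
theorem stmt11 (Γ E : ℝ) (hΓ : 0 < Γ) :
    ‖(∫ q : ℝ,
        (((Real.sqrt (2 * Real.pi * Γ))⁻¹ * Real.exp (-q ^ 2 / (2 * Γ)) : ℝ) : ℂ) *
          Complex.exp (-(I * (E : ℂ) * (|q| : ℝ))))‖ ^ 2 =
      Real.exp (-Γ * E ^ 2) * (1 + erfi (Real.sqrt (Γ / 2) * E) ^ 2) := by
  have hFdef : (∫ q : ℝ,
        (((Real.sqrt (2 * Real.pi * Γ))⁻¹ * Real.exp (-q ^ 2 / (2 * Γ)) : ℝ) : ℂ) *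
          Complex.exp (-(I * (E : ℂ) * (|q| : ℝ)))) = F Γ E := rfl
  rw [hFdef]
  have h := F_eq hΓ E
  rw [v_eq_erfi hΓ E] at h
  set r : ℝ := erfi (Real.sqrt (Γ / 2) * E) with hr
  have hexp : Complex.exp ((Γ * E ^ 2 / 2 : ℝ) : ℂ) ≠ 0 := Complex.exp_ne_zero _
  have hF : F Γ E = Complex.exp (-(Γ * E ^ 2 / 2 : ℝ) : ℂ) * (1 - I * (r : ℂ)) := by
    rw [← h]
    rw [show (-(Γ * E ^ 2 / 2 : ℝ) : ℂ) = -((Γ * E ^ 2 / 2 : ℝ) : ℂ) by push_cast; ring,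
      Complex.exp_neg]
    field_simp
  rw [hF, norm_mul, mul_pow]
  have h1 : ‖(Complex.exp (-(Γ * E ^ 2 / 2 : ℝ) : ℂ))‖ ^ 2
      = Real.exp (-Γ * E ^ 2) := by
    rw [Complex.norm_exp]
    have hre : (-((Γ * E ^ 2 / 2 : ℝ) : ℂ)).re = -(Γ * E ^ 2 / 2) := by
      rw [Complex.neg_re, Complex.ofReal_re]
    rw [hre, sq, ← Real.exp_add]
    congr 1
    ring
  have h2 : ‖(1 - I * (r : ℂ))‖ ^ 2 = 1 + r ^ 2 := by
    rw [Complex.sq_norm, Complex.normSq_apply]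
    simp
    ring
  rw [h1, h2]
end
end
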